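/- If persistence diagrams D₁ and D₂ are orthogonal, then the bottleneck distance satisfies W_∞(D₁, D₂) = max(W_∞(D₁, ∅), W_∞(D₂, ∅)), where ∅ denotes the empty diagram. -/
import Mathlib


open MeasureTheory Filter

noncomputable section

/-- `D` is a persistence diagram: every feature is born before it dies. -/
def IsDiagram (D : Multiset (ℝ × ℝ)) : Prop := ∀ p ∈ D, p.1 < p.2

/-- Supremum norm distance on ℝ². -/
def distSup (x y : ℝ × ℝ) : ℝ := max |x.1 - y.1| |x.2 - y.2|

/-- `M` is a matching between `D₁` and `D₂`: a bijective pairing between the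
diagrams augmented with finitely many diagonal points. -/
def IsMatching (D₁ D₂ : Multiset (ℝ × ℝ)) (M : Multiset ((ℝ × ℝ) × (ℝ × ℝ))) : Prop :=
  ∃ E₁ E₂ : Multiset (ℝ × ℝ), (∀ x ∈ E₁, x.1 = x.2) ∧ (∀ y ∈ E₂, y.1 = y.2) ∧
    M.map Prod.fst = D₁ + E₁ ∧ M.map Prod.snd = D₂ + E₂

/-- The bottleneck cost of a matching: the largest sup-norm distance within a pair. -/
def costSup (M : Multiset ((ℝ × ℝ) × (ℝ × ℝ))) : ℝ :=
  sSup (insert 0 {c | ∃ pr ∈ M, c = distSup pr.1 pr.2})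

/-- Bottleneck distance between persistence diagrams. -/
def bottleneck (D₁ D₂ : Multiset (ℝ × ℝ)) : ℝ :=
  sInf {c | ∃ M, IsMatching D₁ D₂ M ∧ c = costSup M}

/-- `p`-Wasserstein distance between persistence diagrams. -/
def wasserstein (p : ℝ) (D₁ D₂ : Multiset (ℝ × ℝ)) : ℝ :=
  sInf {c | ∃ M, IsMatching D₁ D₂ M ∧
    c = ((M.map fun pr => distSup pr.1 pr.2 ^ p).sum) ^ (1 / p)}

/-- The trivial matching: each point of either diagram is paired with its closest
diagonal point. -/
def trivMatch (D₁ D₂ : Multiset (ℝ × ℝ)) : Multiset ((ℝ × ℝ) × (ℝ × ℝ)) :=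
  (D₁.map fun x => (x, ((x.1 + x.2) / 2, (x.1 + x.2) / 2))) +
  (D₂.map fun y => (((y.1 + y.2) / 2, (y.1 + y.2) / 2), y))

lemma costS_finite (M : Multiset ((ℝ × ℝ) × (ℝ × ℝ))) :
    {c | ∃ pr ∈ M, c = distSup pr.1 pr.2}.Finite := by
  have h : {c | ∃ pr ∈ M, c = distSup pr.1 pr.2}
      = (fun pr : (ℝ × ℝ) × (ℝ × ℝ) => distSup pr.1 pr.2) '' {pr | pr ∈ M} := by
    ext c
    simp only [Set.mem_setOf_eq, Set.mem_image]
    constructor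
    · rintro ⟨pr, hpr, rfl⟩; exact ⟨pr, hpr, rfl⟩
    · rintro ⟨pr, hpr, rfl⟩; exact ⟨pr, hpr, rfl⟩
  rw [h]
  exact (Multiset.finite_toSet M).image _

lemma costSup_nonneg (M : Multiset ((ℝ × ℝ) × (ℝ × ℝ))) : 0 ≤ costSup M :=
  le_csSup (((costS_finite M).insert 0).bddAbove) (Set.mem_insert _ _)

lemma le_costSup {M : Multiset ((ℝ × ℝ) × (ℝ × ℝ))} {pr} (h : pr ∈ M) :
    distSup pr.1 pr.2 ≤ costSup M :=
  le_csSup (((costS_finite M).insert 0).bddAbove)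
    (Set.mem_insert_of_mem _ ⟨pr, h, rfl⟩)

lemma costSup_le {M : Multiset ((ℝ × ℝ) × (ℝ × ℝ))} {B : ℝ} (hB : 0 ≤ B)
    (h : ∀ pr ∈ M, distSup pr.1 pr.2 ≤ B) : costSup M ≤ B := by
  apply csSup_le (Set.insert_nonempty _ _)
  rintro c hc
  rcases Set.mem_insert_iff.mp hc with rfl | ⟨pr, hpr, rfl⟩
  · exact hB
  · exact h pr hpr

lemma distSup_comm (x y : ℝ × ℝ) : distSup x y = distSup y x := by
  simp [distSup, abs_sub_comm]

lemma distSup_triv {p : ℝ × ℝ} (h : p.1 ≤ p.2) :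
    distSup p ((p.1 + p.2) / 2, (p.1 + p.2) / 2) = (p.2 - p.1) / 2 := by
  have h1 : |p.1 - (p.1 + p.2) / 2| = (p.2 - p.1) / 2 := by
    rw [abs_of_nonpos (by linarith)]; ring
  have h2 : |p.2 - (p.1 + p.2) / 2| = (p.2 - p.1) / 2 := by
    rw [abs_of_nonneg (by linarith)]; ring
  simp [distSup, h1, h2]

lemma half_le_distSup_diag {p q : ℝ × ℝ} (hq : q.1 = q.2) :
    (p.2 - p.1) / 2 ≤ distSup p q := by
  have h1 : -(p.1 - q.1) ≤ |p.1 - q.1| := neg_le_abs _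
  have h2 : p.2 - q.2 ≤ |p.2 - q.2| := le_abs_self _
  have h3 : |p.1 - q.1| ≤ distSup p q := le_max_left _ _
  have h4 : |p.2 - q.2| ≤ distSup p q := le_max_right _ _
  linarith

lemma half_le_distSup_orth {x y : ℝ × ℝ} (hx : x.1 < x.2) (hy : y.1 < y.2)
    (h : Set.Ioo x.1 x.2 ∩ Set.Ioo y.1 y.2 = ∅) :
    (x.2 - x.1) / 2 ≤ distSup x y := by
  rw [Set.Ioo_inter_Ioo, Set.Ioo_eq_empty_iff] at h
  push_neg at h
  have h' : min x.2 y.2 ≤ max x.1 y.1 := h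
  have h3 : |x.1 - y.1| ≤ distSup x y := le_max_left _ _
  have h4 : |x.2 - y.2| ≤ distSup x y := le_max_right _ _
  rcases min_le_iff.mp h' with h1 | h1 <;> rcases le_max_iff.mp h1 with h2 | h2
  · linarith
  · have : -(x.1 - y.1) ≤ |x.1 - y.1| := neg_le_abs _
    linarith
  · have : x.2 - y.2 ≤ |x.2 - y.2| := le_abs_self _
    linarith
  · linarith

lemma trivMatch_isMatching (D₁ D₂ : Multiset (ℝ × ℝ)) :
    IsMatching D₁ D₂ (trivMatch D₁ D₂) := by
  refine ⟨D₂.map (fun y => ((y.1 + y.2) / 2, (y.1 + y.2) / 2)),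
          D₁.map (fun x => ((x.1 + x.2) / 2, (x.1 + x.2) / 2)), ?_, ?_, ?_, ?_⟩
  · intro x hx
    rw [Multiset.mem_map] at hx
    obtain ⟨y, _, rfl⟩ := hx
    rfl
  · intro y hy
    rw [Multiset.mem_map] at hy
    obtain ⟨x, _, rfl⟩ := hy
    rfl
  · simp [trivMatch, Multiset.map_map, Function.comp]
  · simp [trivMatch, Multiset.map_map, Function.comp, add_comm]

lemma isMatching_swap {D₁ D₂ : Multiset (ℝ × ℝ)} {M : Multiset ((ℝ × ℝ) × (ℝ × ℝ))}
    (h : IsMatching D₁ D₂ M) : IsMatching D₂ D₁ (M.map Prod.swap) := by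
  obtain ⟨E₁, E₂, hE₁, hE₂, h1, h2⟩ := h
  refine ⟨E₂, E₁, hE₂, hE₁, ?_, ?_⟩
  · rw [Multiset.map_map]
    exact h2
  · rw [Multiset.map_map]
    exact h1

lemma costSup_swap (M : Multiset ((ℝ × ℝ) × (ℝ × ℝ))) :
    costSup (M.map Prod.swap) = costSup M := by
  unfold costSup
  congr 1
  ext c
  simp only [Set.mem_insert_iff, Set.mem_setOf_eq, Multiset.mem_map]
  constructor
  · rintro (rfl | ⟨pr, ⟨q, hq, rfl⟩, rfl⟩)
    · exact Or.inl rfl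
    · exact Or.inr ⟨q, hq, distSup_comm _ _⟩
  · rintro (rfl | ⟨q, hq, rfl⟩)
    · exact Or.inl rfl
    · exact Or.inr ⟨Prod.swap q, ⟨q, hq, rfl⟩, distSup_comm _ _⟩

lemma key_lower (D₁ D₂ : Multiset (ℝ × ℝ)) (M : Multiset ((ℝ × ℝ) × (ℝ × ℝ)))
    (hD₁ : IsDiagram D₁) (hM : IsMatching D₁ D₂ M)
    (hkey : ∀ x ∈ D₁, ∀ y ∈ D₂, (x.2 - x.1) / 2 ≤ distSup x y) :
    costSup (trivMatch D₁ 0) ≤ costSup M := by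
  apply costSup_le (costSup_nonneg M)
  intro pr hpr
  simp only [trivMatch, Multiset.map_zero, add_zero, Multiset.mem_map] at hpr
  obtain ⟨x, hx, rfl⟩ := hpr
  rw [distSup_triv (le_of_lt (hD₁ x hx))]
  obtain ⟨E₁, E₂, hE₁, hE₂, h1, h2⟩ := hM
  have hxM : x ∈ M.map Prod.fst := by
    rw [h1]; exact Multiset.mem_add.mpr (Or.inl hx)
  obtain ⟨pr', hpr', hfst⟩ := Multiset.mem_map.mp hxM
  subst hfst
  have hsnd : pr'.2 ∈ D₂ + E₂ := by
    rw [← h2]; exact Multiset.mem_map_of_mem _ hpr'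
  rcases Multiset.mem_add.mp hsnd with hy | hy
  · exact le_trans (hkey pr'.1 hx pr'.2 hy) (le_costSup hpr')
  · exact le_trans (half_le_distSup_diag (hE₂ _ hy)) (le_costSup hpr')

lemma bottleneck_empty_eq (D : Multiset (ℝ × ℝ)) (hD : IsDiagram D) :
    bottleneck D 0 = costSup (trivMatch D 0) := by
  apply le_antisymm
  · apply csInf_le
    · refine ⟨0, ?_⟩
      rintro c ⟨M, _, rfl⟩
      exact costSup_nonneg M
    · exact ⟨trivMatch D 0, trivMatch_isMatching _ _, rfl⟩
  · apply le_csInf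
    · exact ⟨costSup (trivMatch D 0), trivMatch D 0, trivMatch_isMatching _ _, rfl⟩
    rintro c ⟨M, hM, rfl⟩
    exact key_lower D 0 M hD hM (by intro x _ y hy; exact absurd hy (Multiset.notMem_zero y))

theorem bottleneck_of_orthogonal
    (D₁ D₂ : Multiset (ℝ × ℝ)) (hD₁ : IsDiagram D₁) (hD₂ : IsDiagram D₂)
    (horth : ∀ p₁ ∈ D₁, ∀ p₂ ∈ D₂, Set.Ioo p₁.1 p₁.2 ∩ Set.Ioo p₂.1 p₂.2 = ∅) :
    bottleneck D₁ D₂ = max (bottleneck D₁ 0) (bottleneck D₂ 0) := by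
  rw [bottleneck_empty_eq D₁ hD₁, bottleneck_empty_eq D₂ hD₂]
  apply le_antisymm
  · -- upper bound via the trivial matching
    have hle : bottleneck D₁ D₂ ≤ costSup (trivMatch D₁ D₂) := by
      apply csInf_le
      · refine ⟨0, ?_⟩
        rintro c ⟨M, _, rfl⟩
        exact costSup_nonneg M
      · exact ⟨trivMatch D₁ D₂, trivMatch_isMatching _ _, rfl⟩
    refine le_trans hle ?_
    apply costSup_le (le_trans (costSup_nonneg _) (le_max_left _ _))
    intro pr hpr
    rcases Multiset.mem_add.mp hpr with hpr | hpr
    · obtain ⟨x, hx, rfl⟩ := Multiset.mem_map.mp hpr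
      refine le_trans ?_ (le_max_left _ _)
      apply le_costSup (M := trivMatch D₁ 0)
      simp only [trivMatch, Multiset.map_zero, add_zero, Multiset.mem_map]
      exact ⟨x, hx, rfl⟩
    · obtain ⟨y, hy, rfl⟩ := Multiset.mem_map.mp hpr
      refine le_trans ?_ (le_max_right _ _)
      have hmem : (y, ((y.1 + y.2) / 2, (y.1 + y.2) / 2)) ∈ trivMatch D₂ 0 := by
        simp only [trivMatch, Multiset.map_zero, add_zero, Multiset.mem_map]
        exact ⟨y, hy, rfl⟩
      exact le_of_eq_of_le (distSup_comm _ _) (le_costSup hmem)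
  · -- lower bound using orthogonality
    apply max_le
    · apply le_csInf
      · exact ⟨costSup (trivMatch D₁ D₂), trivMatch D₁ D₂, trivMatch_isMatching _ _, rfl⟩
      rintro c ⟨M, hM, rfl⟩
      apply key_lower D₁ D₂ M hD₁ hM
      intro x hx y hy
      exact half_le_distSup_orth (hD₁ x hx) (hD₂ y hy) (horth x hx y hy)
    · apply le_csInf
      · exact ⟨costSup (trivMatch D₁ D₂), trivMatch D₁ D₂, trivMatch_isMatching _ _, rfl⟩
      rintro c ⟨M, hM, rfl⟩
      rw [← costSup_swap M]
      apply key_lower D₂ D₁ (M.map Prod.swap) hD₂ (isMatching_swap hM)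
      intro y hy x hx
      refine half_le_distSup_orth (hD₂ y hy) (hD₁ x hx) ?_
      rw [Set.inter_comm]
      exact horth x hx y hy
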